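/- Let a > -2 and define the weighted sup norm ‖y‖ = sup_{k≥2} |y_k|/Γ(k+a) on formal power series y = Σ_{k≥2} y_k x^k with finite norm. If G and H are two such series with finite norm, then their Cauchy product GH = Σ_{k≥4} (Σ_{j=2}^{k-2} G_j H_{k-j}) x^k satisfies |(GH)_k| ≤ C·‖G‖·‖H‖·Γ(k-2+a) for all k ≥ 4, where C depends only on a; consequently GH also has finite norm. -/

import Mathlib

open Finset

lemma gamma_prod_le (a : ℝ) (ha : -2 < a) :
    ∀ j : ℕ, 3 ≤ j → ∀ k : ℕ, 2 * j ≤ k →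
      Real.Gamma ((j : ℝ) + a) * Real.Gamma ((k : ℝ) - j + a) ≤
      Real.Gamma (3 + a) * Real.Gamma ((k : ℝ) - 3 + a) := by
  intro j hj
  induction j, hj using Nat.le_induction with
  | base => intro k hk; norm_num
  | succ j hj ih =>
    intro k hk
    have hj3 : (3 : ℝ) ≤ (j : ℝ) := by exact_mod_cast hj
    have hkj : (2 : ℝ) * ((j : ℝ) + 1) ≤ (k : ℝ) := by exact_mod_cast hk
    have hja : 0 < (j : ℝ) + a := by linarith
    have hkja : 0 < (k : ℝ) - j - 1 + a := by linarith
    have h1 : Real.Gamma ((j : ℝ) + 1 + a) = ((j : ℝ) + a) * Real.Gamma ((j : ℝ) + a) := by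
      rw [show (j : ℝ) + 1 + a = ((j : ℝ) + a) + 1 by ring, Real.Gamma_add_one hja.ne']
    have h2 : Real.Gamma ((k : ℝ) - j + a)
        = ((k : ℝ) - j - 1 + a) * Real.Gamma ((k : ℝ) - j - 1 + a) := by
      rw [show (k : ℝ) - j + a = ((k : ℝ) - j - 1 + a) + 1 by ring,
        Real.Gamma_add_one hkja.ne']
    have gj : 0 < Real.Gamma ((j : ℝ) + a) := Real.Gamma_pos_of_pos hja
    have gkj : 0 < Real.Gamma ((k : ℝ) - j - 1 + a) := Real.Gamma_pos_of_pos hkja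
    have key : Real.Gamma ((j : ℝ) + 1 + a) * Real.Gamma ((k : ℝ) - ((j : ℝ) + 1) + a)
        ≤ Real.Gamma ((j : ℝ) + a) * Real.Gamma ((k : ℝ) - j + a) := by
      rw [h1, h2, show (k : ℝ) - ((j : ℝ) + 1) + a = (k : ℝ) - j - 1 + a by ring]
      have hle : (j : ℝ) + a ≤ (k : ℝ) - j - 1 + a := by linarith
      nlinarith [mul_le_mul_of_nonneg_right hle (mul_pos gj gkj).le]
    calc Real.Gamma ((↑(j + 1) : ℝ) + a) * Real.Gamma ((k : ℝ) - ↑(j + 1) + a)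
        = Real.Gamma ((j : ℝ) + 1 + a) * Real.Gamma ((k : ℝ) - ((j : ℝ) + 1) + a) := by
          push_cast; ring_nf
      _ ≤ Real.Gamma ((j : ℝ) + a) * Real.Gamma ((k : ℝ) - j + a) := key
      _ ≤ _ := ih k (by omega)

lemma gamma_prod_le' (a : ℝ) (ha : -2 < a) (j k : ℕ) (h3 : 3 ≤ j) (h3' : j + 3 ≤ k) :
    Real.Gamma ((j : ℝ) + a) * Real.Gamma ((k : ℝ) - j + a) ≤
      Real.Gamma (3 + a) * Real.Gamma ((k : ℝ) - 3 + a) := by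
  rcases le_or_gt (2 * j) k with h | h
  · exact gamma_prod_le a ha j h3 k h
  · have h2 := gamma_prod_le a ha (k - j) (by omega) k (by omega)
    rw [Nat.cast_sub (by omega : j ≤ k),
      show (k : ℝ) - ((k : ℝ) - j) + a = (j : ℝ) + a by ring] at h2
    linarith [h2, mul_comm (Real.Gamma ((k : ℝ) - j + a)) (Real.Gamma ((j : ℝ) + a))]

lemma gamma_conv (a : ℝ) (ha : -2 < a) (k : ℕ) (hk : 4 ≤ k) :
    ∑ j ∈ Icc 2 (k - 2), Real.Gamma ((j : ℝ) + a) * Real.Gamma ((k : ℝ) - j + a)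
      ≤ (2 * Real.Gamma (2 + a) + Real.Gamma (3 + a)) * Real.Gamma ((k : ℝ) - 2 + a) := by
  have g2 : 0 < Real.Gamma (2 + a) := Real.Gamma_pos_of_pos (by linarith)
  have g3 : 0 < Real.Gamma (3 + a) := Real.Gamma_pos_of_pos (by linarith)
  rcases lt_or_ge k 6 with h6 | h6
  · interval_cases k
    · -- k = 4
      norm_num
      nlinarith
    · -- k = 5
      rw [show Icc 2 (5-2) = {2, 3} from rfl]
      rw [Finset.sum_insert (by decide), Finset.sum_singleton]
      norm_num
      nlinarith [Real.Gamma_pos_of_pos (show (0:ℝ) < 3 + a by linarith)]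
  · -- k ≥ 6
    have e1 : Icc 2 (k - 2) = insert 2 (insert (k - 2) (Icc 3 (k - 3))) := by
      ext x; simp only [mem_Icc, mem_insert]; omega
    rw [e1, Finset.sum_insert (by simp only [mem_insert, mem_Icc]; omega),
      Finset.sum_insert (by simp only [mem_Icc]; omega)]
    have hmid : ∑ j ∈ Icc 3 (k - 3),
        Real.Gamma ((j : ℝ) + a) * Real.Gamma ((k : ℝ) - j + a)
        ≤ (Icc 3 (k - 3)).card • (Real.Gamma (3 + a) * Real.Gamma ((k : ℝ) - 3 + a)) := by
      apply Finset.sum_le_card_nsmul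
      intro j hj
      simp only [mem_Icc] at hj
      exact gamma_prod_le' a ha j k hj.1 (by omega)
    rw [Nat.card_Icc] at hmid
    have hcard : (k - 3 + 1 - 3) = k - 5 := by omega
    rw [hcard, nsmul_eq_mul] at hmid
    have hc5 : ((k - 5 : ℕ) : ℝ) = (k : ℝ) - 5 := by
      rw [Nat.cast_sub (by omega)]; norm_num
    rw [hc5] at hmid
    have hterm2 : Real.Gamma ((2 : ℕ) + a) * Real.Gamma ((k : ℝ) - 2 + a)
        = Real.Gamma (2 + a) * Real.Gamma ((k : ℝ) - 2 + a) := by norm_num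
    have hcast : ((k - 2 : ℕ) : ℝ) = (k : ℝ) - 2 := by
      rw [Nat.cast_sub (by omega)]; norm_num
    have hterm3 : Real.Gamma ((↑(k - 2) : ℝ) + a) * Real.Gamma ((k : ℝ) - ↑(k - 2) + a)
        = Real.Gamma ((k : ℝ) - 2 + a) * Real.Gamma (2 + a) := by
      rw [hcast, show (k : ℝ) - ((k : ℝ) - 2) + a = 2 + a by ring]
    have hGrec : Real.Gamma ((k : ℝ) - 2 + a)
        = ((k : ℝ) - 3 + a) * Real.Gamma ((k : ℝ) - 3 + a) := by
      have : (0 : ℝ) < (k : ℝ) - 3 + a := by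
        have : (6 : ℝ) ≤ (k : ℝ) := by exact_mod_cast h6
        linarith
      rw [show (k : ℝ) - 2 + a = ((k : ℝ) - 3 + a) + 1 by ring, Real.Gamma_add_one this.ne']
    have hk6 : (6 : ℝ) ≤ (k : ℝ) := by exact_mod_cast h6
    have gk3 : 0 < Real.Gamma ((k : ℝ) - 3 + a) := Real.Gamma_pos_of_pos (by linarith)
    have hmid2 : ((k : ℝ) - 5) * (Real.Gamma (3 + a) * Real.Gamma ((k : ℝ) - 3 + a))
        ≤ Real.Gamma (3 + a) * Real.Gamma ((k : ℝ) - 2 + a) := by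
      rw [hGrec]
      nlinarith [mul_le_mul_of_nonneg_right
        (show (k : ℝ) - 5 ≤ (k : ℝ) - 3 + a by linarith) (mul_pos g3 gk3).le]
    push_cast
    nlinarith [hmid, hmid2]


/-- Cauchy product bound in the weighted norm `‖y‖ = sup_{k≥2}|y_k|/Γ(k+a)`: if the
coefficients of `G` and `H` satisfy `|G_k| ≤ NG Γ(k+a)` and `|H_k| ≤ NH Γ(k+a)` for
`k ≥ 2`, then `|(GH)_k| = |Σ_{j=2}^{k-2} G_j H_{k-j}| ≤ C NG NH Γ(k-2+a)` for `k ≥ 4`,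
with `C = C(a)`; consequently `GH` also has finite weighted norm. -/
theorem stmt7 (a : ℝ) (ha : -2 < a) :
    ∃ C > (0 : ℝ), ∀ (G H : ℕ → ℝ) (NG NH : ℝ),
      (∀ k, 2 ≤ k → |G k| ≤ NG * Real.Gamma ((k : ℝ) + a)) →
      (∀ k, 2 ≤ k → |H k| ≤ NH * Real.Gamma ((k : ℝ) + a)) →
      (∀ k, 4 ≤ k →
        |∑ j ∈ Finset.Icc 2 (k - 2), G j * H (k - j)|
          ≤ C * NG * NH * Real.Gamma ((k : ℝ) - 2 + a)) ∧
      ∃ M : ℝ, ∀ k, 4 ≤ k →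
        |∑ j ∈ Finset.Icc 2 (k - 2), G j * H (k - j)| ≤ M * Real.Gamma ((k : ℝ) + a) := by
  have g2 : 0 < Real.Gamma (2 + a) := Real.Gamma_pos_of_pos (by linarith)
  have g3 : 0 < Real.Gamma (3 + a) := Real.Gamma_pos_of_pos (by linarith)
  set C : ℝ := 2 * Real.Gamma (2 + a) + Real.Gamma (3 + a) with hC
  refine ⟨C, by positivity, ?_⟩
  intro G H NG NH hG hH
  -- nonnegativity of NG, NH
  have hg2' : 0 < Real.Gamma ((2 : ℕ) + a) := by norm_num; exact g2
  have hNG : 0 ≤ NG := by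
    have h := hG 2 le_rfl
    nlinarith [abs_nonneg (G 2)]
  have hNH : 0 ≤ NH := by
    have h := hH 2 le_rfl
    nlinarith [abs_nonneg (H 2)]
  have key : ∀ k, 4 ≤ k →
      |∑ j ∈ Finset.Icc 2 (k - 2), G j * H (k - j)|
        ≤ C * NG * NH * Real.Gamma ((k : ℝ) - 2 + a) := by
    intro k hk
    have step1 : |∑ j ∈ Finset.Icc 2 (k - 2), G j * H (k - j)|
        ≤ ∑ j ∈ Finset.Icc 2 (k - 2),
            (NG * NH) * (Real.Gamma ((j : ℝ) + a) * Real.Gamma ((k : ℝ) - j + a)) := by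
      refine (Finset.abs_sum_le_sum_abs _ _).trans (Finset.sum_le_sum ?_)
      intro j hj
      simp only [Finset.mem_Icc] at hj
      have hj2 : 2 ≤ j := hj.1
      have hjk : 2 ≤ k - j := by omega
      have hGj := hG j hj2
      have hHj := hH (k - j) hjk
      have hcast : ((k - j : ℕ) : ℝ) = (k : ℝ) - j := by
        rw [Nat.cast_sub (by omega)]
      rw [hcast] at hHj
      have h1 : 0 ≤ |G j| := abs_nonneg _
      have h2 : 0 ≤ |H (k - j)| := abs_nonneg _
      have gkj : 0 < Real.Gamma ((k : ℝ) - j + a) := by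
        apply Real.Gamma_pos_of_pos
        have hjk' : (j : ℝ) + 2 ≤ (k : ℝ) := by exact_mod_cast (by omega : j + 2 ≤ k)
        linarith
      calc |G j * H (k - j)| = |G j| * |H (k - j)| := abs_mul _ _
        _ ≤ (NG * Real.Gamma ((j : ℝ) + a)) * (NH * Real.Gamma ((k : ℝ) - j + a)) := by
            have hj2' : (2 : ℝ) ≤ (j : ℝ) := by exact_mod_cast hj2
            exact mul_le_mul hGj hHj h2
              (mul_nonneg hNG (Real.Gamma_pos_of_pos (by linarith)).le)
        _ = (NG * NH) * (Real.Gamma ((j : ℝ) + a) * Real.Gamma ((k : ℝ) - j + a)) := by ring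
    rw [← Finset.mul_sum] at step1
    have step2 := gamma_conv a ha k hk
    calc |∑ j ∈ Finset.Icc 2 (k - 2), G j * H (k - j)|
        ≤ (NG * NH) * ∑ j ∈ Finset.Icc 2 (k - 2),
            Real.Gamma ((j : ℝ) + a) * Real.Gamma ((k : ℝ) - j + a) := step1
      _ ≤ (NG * NH) * (C * Real.Gamma ((k : ℝ) - 2 + a)) :=
          mul_le_mul_of_nonneg_left step2 (by positivity)
      _ = C * NG * NH * Real.Gamma ((k : ℝ) - 2 + a) := by ring
  refine ⟨key, C * NG * NH / ((2 + a) * (3 + a)), ?_⟩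
  intro k hk
  have hk4 : (4 : ℝ) ≤ (k : ℝ) := by exact_mod_cast hk
  have h2a : (0 : ℝ) < 2 + a := by linarith
  have h3a : (0 : ℝ) < 3 + a := by linarith
  have hka2 : (0 : ℝ) < (k : ℝ) - 2 + a := by linarith
  have hka1 : (0 : ℝ) < (k : ℝ) - 1 + a := by linarith
  have gk2 : 0 < Real.Gamma ((k : ℝ) - 2 + a) := Real.Gamma_pos_of_pos hka2
  have hGrec : Real.Gamma ((k : ℝ) + a)
      = ((k : ℝ) - 1 + a) * (((k : ℝ) - 2 + a) * Real.Gamma ((k : ℝ) - 2 + a)) := by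
    rw [show (k : ℝ) + a = ((k : ℝ) - 1 + a) + 1 by ring, Real.Gamma_add_one hka1.ne',
      show (k : ℝ) - 1 + a = ((k : ℝ) - 2 + a) + 1 by ring, Real.Gamma_add_one hka2.ne']
  have hgamle : Real.Gamma ((k : ℝ) - 2 + a)
      ≤ (1 / ((2 + a) * (3 + a))) * Real.Gamma ((k : ℝ) + a) := by
    rw [hGrec]
    have hfac : (2 + a) * (3 + a) ≤ ((k : ℝ) - 1 + a) * ((k : ℝ) - 2 + a) := by nlinarith
    have := mul_le_mul_of_nonneg_right hfac gk2.le
    calc Real.Gamma ((k : ℝ) - 2 + a)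
        = (1 / ((2 + a) * (3 + a))) * ((2 + a) * (3 + a) * Real.Gamma ((k : ℝ) - 2 + a)) := by
          field_simp
      _ ≤ (1 / ((2 + a) * (3 + a))) *
            (((k : ℝ) - 1 + a) * (((k : ℝ) - 2 + a) * Real.Gamma ((k : ℝ) - 2 + a))) := by
          apply mul_le_mul_of_nonneg_left _ (by positivity)
          nlinarith [this]
  calc |∑ j ∈ Finset.Icc 2 (k - 2), G j * H (k - j)|
      ≤ C * NG * NH * Real.Gamma ((k : ℝ) - 2 + a) := key k hk
    _ ≤ C * NG * NH * ((1 / ((2 + a) * (3 + a))) * Real.Gamma ((k : ℝ) + a)) := by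
        apply mul_le_mul_of_nonneg_left hgamle (by positivity)
    _ = C * NG * NH / ((2 + a) * (3 + a)) * Real.Gamma ((k : ℝ) + a) := by ring
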